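/- For every integer k ≥ 3, a(k) = (a(k−1)·k·(k+5) + 2·a(k−3)·(k+3)) / ((k+6)·(k+1)); in particular a(k) is a weighted average of a(k−1) and a(k−3) with positive weights summing to 1. -/
import Mathlib


/-- `pq n = (p n, q n)` where `p n` (resp. `q n`) is the probability that the
exploitative player X, always guessing `2` or `n-1`, wins the misère search game
`MS(P_n)` against the uniformly random player R when playing first (resp. second):
`p 0 = p 1 = 0`, `q 0 = 0`,
`q n = (1/n) * ∑_{i=1}^{n} ((i-1)·p(i-1) + (n-i)·p(n-i) + 1)/n` for `n ≥ 1`, and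
`p n = 1/n + ((n-2)/n) * q (n-2)` for `n ≥ 2`. -/
noncomputable def pq : ℕ → ℝ × ℝ
  | 0 => (0, 0)
  | 1 =>
    (0,
      (1 / ((1 : ℕ) : ℝ)) * ∑ i ∈ (Finset.Icc 1 1).attach,
        (((i.1 - 1 : ℕ) : ℝ) * (pq (i.1 - 1)).1 +
          ((1 - i.1 : ℕ) : ℝ) * (pq (1 - i.1)).1 + 1) / ((1 : ℕ) : ℝ))
  | n + 2 =>
    (1 / ((n : ℝ) + 2) + ((n : ℝ) / ((n : ℝ) + 2)) * (pq n).2,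
      (1 / ((n : ℝ) + 2)) * ∑ i ∈ (Finset.Icc 1 (n + 2)).attach,
        (((i.1 - 1 : ℕ) : ℝ) * (pq (i.1 - 1)).1 +
          ((n + 2 - i.1 : ℕ) : ℝ) * (pq (n + 2 - i.1)).1 + 1) / ((n : ℝ) + 2))
  decreasing_by
  · have hm := i.2; simp only [Finset.mem_Icc] at hm; omega
  · have hm := i.2; simp only [Finset.mem_Icc] at hm; omega
  · omega
  · have hm := i.2; simp only [Finset.mem_Icc] at hm; omega
  · have hm := i.2; simp only [Finset.mem_Icc] at hm; omega

/-- X's winning probability in `MS(P_n)` playing first. -/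
noncomputable def p (n : ℕ) : ℝ := (pq n).1

/-- X's winning probability in `MS(P_n)` playing second. -/
noncomputable def q (n : ℕ) : ℝ := (pq n).2

/-- `s n = ∑_{i=1}^{n} i * p i`. -/
noncomputable def s (n : ℕ) : ℝ := ∑ i ∈ Finset.Icc 1 n, (i : ℝ) * p i

/-- `a k = (s k + 2(k+1)) / (k² + 7k + 6)`. -/
noncomputable def a (k : ℕ) : ℝ :=
  (s k + 2 * ((k : ℝ) + 1)) / ((k : ℝ) ^ 2 + 7 * (k : ℝ) + 6)

/-- `b k` is the maximum absolute difference between any two of `a k, a (k+1), a (k+2)`. -/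
noncomputable def b (k : ℕ) : ℝ :=
  max |a k - a (k + 1)| (max |a (k + 1) - a (k + 2)| |a k - a (k + 2)|)


lemma q_one : q 1 = 1 := by
  rw [q, pq]
  rw [Finset.sum_attach (Finset.Icc 1 1)
    (fun i => (((i-1:ℕ):ℝ) * (pq (i-1)).1 + ((1-i:ℕ):ℝ) * (pq (1-i)).1 + 1) / ((1:ℕ):ℝ))]
  norm_num

lemma p_succ (n : ℕ) : p (n+2) = 1/((n:ℝ)+2) + ((n:ℝ)/((n:ℝ)+2)) * q n := by
  rw [p, pq, q]

lemma q_succ (n : ℕ) : q (n+2) = (1/((n:ℝ)+2)) * ∑ i ∈ Finset.Icc 1 (n+2),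
    (((i-1:ℕ):ℝ) * p (i-1) + ((n+2-i:ℕ):ℝ) * p (n+2-i) + 1)/((n:ℝ)+2) := by
  rw [q, pq]
  rw [Finset.sum_attach (Finset.Icc 1 (n+2))
    (fun i => (((i-1:ℕ):ℝ) * (pq (i-1)).1 + ((n+2-i:ℕ):ℝ) * (pq (n+2-i)).1 + 1) / ((n:ℝ)+2))]
  rfl

lemma sum_shift (f : ℕ → ℝ) (m : ℕ) :
    ∑ i ∈ Finset.Icc 1 m, f (i-1) = ∑ j ∈ Finset.range m, f j := by
  induction m with
  | zero => simp
  | succ m ih =>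
    rw [Finset.sum_Icc_succ_top (by omega : 1 ≤ m+1), ih, Finset.sum_range_succ]
    simp

lemma sum_rev (f : ℕ → ℝ) (m : ℕ) :
    ∑ i ∈ Finset.Icc 1 m, f (m-i) = ∑ i ∈ Finset.Icc 1 m, f (i-1) := by
  refine Finset.sum_nbij' (fun a => m+1-a) (fun a => m+1-a) ?_ ?_ ?_ ?_ ?_ <;>
    simp only [Finset.mem_Icc] <;> intro a ha <;> first
      | omega
      | (congr 1; omega)

lemma s_range (m : ℕ) : ∑ j ∈ Finset.range (m+1), (j:ℝ) * p j = s m := by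
  induction m with
  | zero => simp [s]
  | succ m ih =>
    rw [Finset.sum_range_succ, ih, s, s, Finset.sum_Icc_succ_top (by omega : 1 ≤ m+1)]

lemma s_zero : s 0 = 0 := by simp [s]

lemma q_formula (n : ℕ) : q (n+1) = (2 * s n + ((n:ℝ)+1)) / ((n:ℝ)+1)^2 := by
  cases n with
  | zero => rw [q_one, s_zero]; norm_num
  | succ m =>
    rw [q_succ m]
    have h1 : ∑ i ∈ Finset.Icc 1 (m+2),
        (((i-1:ℕ):ℝ) * p (i-1) + ((m+2-i:ℕ):ℝ) * p (m+2-i) + 1)/((m:ℝ)+2)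
        = (s (m+1) + s (m+1) + ((m:ℝ)+2)) / ((m:ℝ)+2) := by
      rw [← Finset.sum_div]
      congr 1
      rw [Finset.sum_add_distrib, Finset.sum_add_distrib, Finset.sum_const,
        Nat.card_Icc]
      rw [sum_shift (fun j => (j:ℝ) * p j) (m+2),
        sum_rev (fun j => (j:ℝ) * p j) (m+2),
        sum_shift (fun j => (j:ℝ) * p j) (m+2), s_range (m+1)]
      push_cast
      ring
    rw [h1]
    have h2 : ((m:ℝ)+2) ≠ 0 := by positivity
    push_cast
    field_simp
    ring

lemma s_rec (m : ℕ) : s (m+3) = s (m+2) + 2 + 2 * s m / ((m:ℝ)+1) := by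
  have hs : s (m+3) = s (m+2) + ((m:ℝ)+3) * p (m+3) := by
    rw [s, s, Finset.sum_Icc_succ_top (by omega : 1 ≤ m+3)]
    push_cast; ring
  have hp : p (m+3) = 1/((m:ℝ)+3) + (((m:ℝ)+1)/((m:ℝ)+3)) * q (m+1) := by
    have := p_succ (m+1); push_cast at this ⊢; convert this using 3 <;> ring
  have hq := q_formula m
  rw [hs, hp, hq]
  have h1 : ((m:ℝ)+1) ≠ 0 := by positivity
  have h3 : ((m:ℝ)+3) ≠ 0 := by positivity
  field_simp
  ring

/-- For every `k ≥ 3`,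
`a k = (a (k-1) * k * (k+5) + 2 * a (k-3) * (k+3)) / ((k+6) * (k+1))`;
in particular `a k` is a weighted average of `a (k-1)` and `a (k-3)`. -/
theorem a_weighted_average (k : ℕ) (hk : 3 ≤ k) :
    a k = (a (k - 1) * (k : ℝ) * ((k : ℝ) + 5) + 2 * a (k - 3) * ((k : ℝ) + 3)) /
      (((k : ℝ) + 6) * ((k : ℝ) + 1)) := by
  obtain ⟨m, rfl⟩ : ∃ m, k = m + 3 := ⟨k - 3, by omega⟩
  have e1 : m + 3 - 1 = m + 2 := rfl
  have e3 : m + 3 - 3 = m := rfl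
  rw [e1, e3, a, a, a, s_rec m]
  have hx : (0:ℝ) ≤ (m:ℝ) := Nat.cast_nonneg m
  have h1 : ((m:ℝ)+1) ≠ 0 := by positivity
  have d1 : ((m:ℝ)+3)^2 + 7*((m:ℝ)+3) + 6 ≠ 0 := by positivity
  have d2 : ((m:ℝ)+2)^2 + 7*((m:ℝ)+2) + 6 ≠ 0 := by positivity
  have d3 : ((m:ℝ))^2 + 7*(m:ℝ) + 6 ≠ 0 := by positivity
  have d4 : (((m:ℝ)+3)+6) * (((m:ℝ)+3)+1) ≠ 0 := by positivity
  push_cast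
  field_simp
  ring
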